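/- Let n ≥ 1 and let σ ⊂ ℝ^{n+1} be the convex hull of n+1 affinely independent points p₀, …, pₙ (an n-simplex). Let H be an affine hyperplane of ℝ^{n+1} and let μ be the orthogonal reflection of ℝ^{n+1} across H. If μ maps σ onto σ and σ is not contained in H, then exactly n−1 of the points p₀, …, pₙ lie in H; moreover, there exist two families of n+1 affinely independent points A and B in ℝ^{n+1} such that σ = convexHull(A) ∪ convexHull(B) and μ maps convexHull(A) onto convexHull(B). -/

import Mathlib

open Set

noncomputable section

open Finset in
private lemma mem_hull_iff' {V : Type*} [AddCommGroup V] [Module ℝ V] {N : ℕ}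
    (q : Fin N → V) (x : V) :
    x ∈ convexHull ℝ (Set.range q) ↔
      ∃ w : Fin N → ℝ, (∀ k, 0 ≤ w k) ∧ ∑ k, w k = 1 ∧ ∑ k, w k • q k = x := by
  rw [convexHull_range_eq_exists_affineCombination]
  constructor
  · rintro ⟨s, w, h0, h1, rfl⟩
    refine ⟨fun k => if k ∈ s then w k else 0, fun k => ?_, ?_, ?_⟩
    · by_cases h : k ∈ s <;> simp [h, h0 k]
    · rw [Finset.sum_ite_mem, Finset.univ_inter]; exact h1
    · rw [Finset.affineCombination_eq_linear_combination s q w h1]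
      simp only [ite_smul, zero_smul]
      rw [Finset.sum_ite_mem, Finset.univ_inter]
  · rintro ⟨w, h0, h1, rfl⟩
    exact ⟨Finset.univ, w, fun k _ => h0 k, h1,
      Finset.affineCombination_eq_linear_combination _ _ _ h1⟩

open Finset in
private lemma extreme_eq' {V : Type*} [AddCommGroup V] [Module ℝ V] {N : ℕ}
    {q : Fin N → V} (hq : AffineIndependent ℝ q) :
    (convexHull ℝ (Set.range q)).extremePoints ℝ = Set.range q := by
  refine subset_antisymm extremePoints_convexHull_subset ?_
  rintro _ ⟨i, rfl⟩
  rw [mem_extremePoints_iff_forall_segment]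
  refine ⟨subset_convexHull ℝ _ (Set.mem_range_self i), ?_⟩
  intro x₁ h₁ x₂ h₂ hseg
  obtain ⟨w₁, hw₁0, hw₁1, hx₁⟩ := (mem_hull_iff' q x₁).1 h₁
  obtain ⟨w₂, hw₂0, hw₂1, hx₂⟩ := (mem_hull_iff' q x₂).1 h₂
  obtain ⟨a, b, ha, hb, hab, hx⟩ := hseg
  rcases eq_or_lt_of_le ha with ha0 | ha0
  · right
    rw [← ha0, zero_add] at hab
    rw [← hx, ← ha0, zero_smul, zero_add, hab, one_smul]
  rcases eq_or_lt_of_le hb with hb0 | hb0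
  · left
    rw [← hb0, add_zero] at hab
    rw [← hx, ← hb0, zero_smul, add_zero, hab, one_smul]
  · left
    have hkey : ∀ k, a * w₁ k + b * w₂ k = (if k = i then (1:ℝ) else 0) := by
      have h := hq.eq_of_sum_eq_sum (s := Finset.univ)
        (w₁ := fun k => a * w₁ k + b * w₂ k) (w₂ := fun k => if k = i then (1:ℝ) else 0)
        (by simp [Finset.sum_add_distrib, ← Finset.mul_sum, hw₁1, hw₂1, hab])
        (by
          simp only [add_smul, mul_smul, Finset.sum_add_distrib, ← Finset.smul_sum,
            ite_smul, zero_smul, Finset.sum_ite_eq', Finset.mem_univ, if_true, one_smul]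
          rw [hx₁, hx₂, hx])
      exact fun k => h k (Finset.mem_univ k)
    have hz : ∀ k, k ≠ i → w₁ k = 0 := by
      intro k hk
      have h := hkey k
      rw [if_neg hk] at h
      nlinarith [hw₁0 k, hw₂0 k, mul_nonneg hb (hw₂0 k)]
    have hi1 : w₁ i = 1 := by
      rw [← hw₁1, Finset.sum_eq_single i (fun k _ hk => hz k hk) (by simp)]
    rw [← hx₁, Finset.sum_eq_single i (fun k _ hk => by rw [hz k hk, zero_smul]) (by simp),
      hi1, one_smul]
    

private lemma extreme_image' {V : Type*} [AddCommGroup V] [Module ℝ V]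
    (e : V ≃ᵃ[ℝ] V) (s : Set V) :
    ⇑e '' (s.extremePoints ℝ) = (⇑e '' s).extremePoints ℝ := by
  have mono : ∀ (e : V ≃ᵃ[ℝ] V) (s : Set V),
      ⇑e '' (s.extremePoints ℝ) ⊆ (⇑e '' s).extremePoints ℝ := by
    intro e s
    rintro _ ⟨x, hx, rfl⟩
    rw [mem_extremePoints] at hx ⊢
    refine ⟨Set.mem_image_of_mem _ hx.1, ?_⟩
    rintro _ ⟨x₁, hx₁, rfl⟩ _ ⟨x₂, hx₂, rfl⟩ hseg
    have himg : ⇑e '' openSegment ℝ x₁ x₂ = openSegment ℝ (e x₁) (e x₂) := by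
      have := image_openSegment _ e.toAffineMap x₁ x₂
      simpa using this
    rw [← himg] at hseg
    obtain ⟨y, hy, hye⟩ := hseg
    obtain ⟨h1, h2⟩ := hx.2 x₁ hx₁ x₂ hx₂ (e.injective hye ▸ hy)
    exact ⟨by rw [h1], by rw [h2]⟩
  apply subset_antisymm (mono e s)
  intro x hx
  have h2 := mono e.symm (⇑e '' s) (Set.mem_image_of_mem _ hx)
  have h3 : ⇑e.symm '' (⇑e '' s) = s := by
    rw [← Set.image_comp]; simp
  rw [h3] at h2
  exact ⟨e.symm x, h2, by simp⟩

open Finset in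
private lemma indep_of_univ' {V : Type*} [AddCommGroup V] [Module ℝ V] {N : ℕ} (q : Fin N → V)
    (h : ∀ w : Fin N → ℝ, ∑ k, w k = 0 → ∑ k, w k • q k = 0 → ∀ e, w e = 0) :
    AffineIndependent ℝ q := by
  rw [affineIndependent_iff]
  intro s w hw hcomb e he
  have h2 := h (fun k => if k ∈ s then w k else 0)
    (by rw [Finset.sum_ite_mem, Finset.univ_inter]; exact hw)
    (by simp only [ite_smul, zero_smul]; rw [Finset.sum_ite_mem, Finset.univ_inter]; exact hcomb)
    e
  simpa [he] using h2

open Finset in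
private lemma sum_smul_update' {V : Type*} [AddCommGroup V] [Module ℝ V] {N : ℕ}
    (g : Fin N → ℝ) (q : Fin N → V) (a : Fin N) (v : V) :
    ∑ k, g k • Function.update q a v k = (∑ k, g k • q k) + g a • v - g a • q a := by
  have h : ∀ k, g k • Function.update q a v k
      = g k • q k + (if k = a then g a • v - g a • q a else 0) := by
    intro k
    by_cases h : k = a
    · subst h; simp
    · simp [Function.update_of_ne h, h]
  simp_rw [h]
  rw [Finset.sum_add_distrib, Finset.sum_ite_eq', if_pos (Finset.mem_univ a)]
  abel

theorem stmt7 (n : ℕ) (hn : 1 ≤ n)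
    (p : Fin (n + 1) → EuclideanSpace ℝ (Fin (n + 1)))
    (hp : AffineIndependent ℝ p)
    (H : AffineSubspace ℝ (EuclideanSpace ℝ (Fin (n + 1)))) [Nonempty H]
    (hH : Module.finrank ℝ H.direction = n)
    (hnsub : ¬ convexHull ℝ (Set.range p) ⊆ (H : Set (EuclideanSpace ℝ (Fin (n + 1)))))
    (hmap : (EuclideanGeometry.reflection H) '' convexHull ℝ (Set.range p)
        = convexHull ℝ (Set.range p)) :
    {i : Fin (n + 1) | p i ∈ H}.ncard = n - 1 ∧
      ∃ (A B : Fin (n + 1) → EuclideanSpace ℝ (Fin (n + 1))),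
        AffineIndependent ℝ A ∧ AffineIndependent ℝ B ∧
        convexHull ℝ (Set.range p) = convexHull ℝ (Set.range A) ∪ convexHull ℝ (Set.range B) ∧
        (EuclideanGeometry.reflection H) '' convexHull ℝ (Set.range A)
          = convexHull ℝ (Set.range B) := by
  classical
  set μ := EuclideanGeometry.reflection H with hμdef
  -- μ permutes the vertices
  have h1 : ⇑μ '' Set.range p = Set.range p := by
    have h := extreme_image' μ.toAffineEquiv (convexHull ℝ (Set.range p))
    rw [AffineIsometryEquiv.coe_toAffineEquiv] at h
    rwa [hmap, extreme_eq' hp] at h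
  have hmem : ∀ k, ∃ l, μ (p k) = p l := by
    intro k
    have : μ (p k) ∈ Set.range p := h1 ▸ Set.mem_image_of_mem _ (Set.mem_range_self k)
    obtain ⟨l, hl⟩ := this
    exact ⟨l, hl.symm⟩
  choose f hf using hmem
  have hff : ∀ k, f (f k) = k := by
    intro k
    apply hp.injective
    rw [← hf (f k), ← hf k, hμdef, EuclideanGeometry.reflection_reflection]
  have hfix : ∀ k, (p k ∈ H ↔ f k = k) := by
    intro k
    rw [← EuclideanGeometry.reflection_eq_self_iff (p k), ← hμdef, hf k, hp.injective.eq_iff]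
  -- some vertex is moved
  have hex : ∃ i, f i ≠ i := by
    by_contra hall
    push_neg at hall
    apply hnsub
    refine convexHull_min ?_ (AffineSubspace.convex H)
    rintro _ ⟨k, rfl⟩
    exact (hfix k).2 (hall k)
  obtain ⟨i, hi⟩ := hex
  set j := f i with hjdef
  have hji : f j = i := hff i
  have hij : i ≠ j := fun h => hi h.symm
  -- the normal direction is 1-dimensional
  have hsub : ∀ x : EuclideanSpace ℝ (Fin (n + 1)), x - μ x ∈ H.directionᗮ := by
    intro x
    have hq := EuclideanGeometry.vsub_orthogonalProjection_mem_direction_orthogonal H x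
    have h2 : x - μ x = (2:ℝ) • (x -ᵥ (EuclideanGeometry.orthogonalProjection H x : EuclideanSpace ℝ (Fin (n + 1)))) := by
      rw [hμdef, EuclideanGeometry.reflection_apply']
      simp only [vsub_eq_sub, vadd_eq_add]
      rw [two_smul]
      abel
    rw [h2]
    exact Submodule.smul_mem _ _ hq
  have hdim : Module.finrank ℝ H.directionᗮ = 1 := by
    have hadd := Submodule.finrank_add_finrank_orthogonal (K := H.direction)
    have hfr : Module.finrank ℝ (EuclideanSpace ℝ (Fin (n + 1))) = n + 1 := finrank_euclideanSpace_fin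
    rw [hH, hfr] at hadd
    omega
  have hu : p i - p j ∈ H.directionᗮ := by
    have h := hsub (p i)
    rwa [hf i, ← hjdef] at h
  have hu0 : p i - p j ≠ 0 := sub_ne_zero_of_ne fun h => hij (hp.injective h)
  -- all other vertices are fixed
  have honec : ∀ k, k ≠ i → k ≠ j → f k = k := by
    intro k hki hkj
    by_contra hkk
    have hki' : f k ≠ i := by
      intro h
      apply hkj
      rw [← hff k, h, ← hjdef]
    have hkj' : f k ≠ j := by
      intro h
      apply hki
      rw [← hff k, h, hji]
    have hv : p k - p (f k) ∈ H.directionᗮ := by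
      have h := hsub (p k)
      rwa [hf k] at h
    have hspan : Submodule.span ℝ {p i - p j} = H.directionᗮ := by
      apply Submodule.eq_of_le_of_finrank_eq
      · rw [Submodule.span_le, Set.singleton_subset_iff]; exact hu
      · rw [finrank_span_singleton hu0, hdim]
    obtain ⟨c, hc⟩ := Submodule.mem_span_singleton.1 (hspan ▸ hv)
    -- contradiction with affine independence
    have heq := hp.eq_of_sum_eq_sum (s := Finset.univ)
      (w₁ := fun m => (if m = k then (1:ℝ) else 0) + (if m = j then c else 0))
      (w₂ := fun m => (if m = f k then (1:ℝ) else 0) + (if m = i then c else 0))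
      (by simp [Finset.sum_add_distrib])
      (by
        simp only [add_smul, ite_smul, zero_smul, Finset.sum_add_distrib,
          Finset.sum_ite_eq', Finset.mem_univ, if_true]
        linear_combination (norm := module) - hc)
      k (Finset.mem_univ k)
    simp only [if_pos rfl, if_neg hkj, if_neg (Ne.symm hkk), if_neg hki, add_zero,
      zero_add] at heq
    exact one_ne_zero heq
  -- the count
  have hSet : {k : Fin (n+1) | p k ∈ H} = ({i, j} : Set (Fin (n+1)))ᶜ := by
    ext k
    simp only [Set.mem_setOf_eq, Set.mem_compl_iff, Set.mem_insert_iff,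
      Set.mem_singleton_iff, hfix k]
    constructor
    · intro hk h
      rcases h with rfl | rfl
      · exact hi hk
      · exact hij (hji.symm.trans hk)
    · intro h
      exact honec k (fun h' => h (Or.inl h')) (fun h' => h (Or.inr h'))
  have hcard : {k : Fin (n+1) | p k ∈ H}.ncard = n - 1 := by
    rw [hSet]
    have h2 := Set.ncard_add_ncard_compl ({i, j} : Set (Fin (n+1)))
    rw [Set.ncard_pair hij] at h2
    have h3 : Nat.card (Fin (n+1)) = n + 1 := by simp
    omega
  refine ⟨hcard, ?_⟩
  -- the decomposition
  set m := midpoint ℝ (p i) (p j) with hmdef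
  have hmi : μ (p i) = p j := by rw [hf i, ← hjdef]
  have hmH : m ∈ H := by
    have h2 : m = (EuclideanGeometry.orthogonalProjection H (p i) : EuclideanSpace ℝ (Fin (n + 1))) := by
      rw [hmdef, ← hmi, midpoint_eq_iff', Equiv.pointReflection_apply, hμdef,
        EuclideanGeometry.reflection_apply']
    rw [h2]
    exact (EuclideanGeometry.orthogonalProjection H (p i)).2
  have hmm : m + m = p i + p j := midpoint_add_self ℝ (p i) (p j)
  set A := Function.update p j m with hAdef
  set B := Function.update p i m with hBdef
  have hAi : A i = p i := Function.update_of_ne hij m p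
  have hAj : A j = m := Function.update_self j m p
  have hBi : B i = m := Function.update_self i m p
  have hBj : B j = p j := Function.update_of_ne (Ne.symm hij) m p
  -- affine independence of the halves
  have hindep : ∀ (a b : Fin (n+1)), a ≠ b →
      AffineIndependent ℝ (Function.update p b (midpoint ℝ (p a) (p b))) := by
    intro a b hab
    apply indep_of_univ'
    intro w hw0 hcomb e
    rw [sum_smul_update' w p b (midpoint ℝ (p a) (p b))] at hcomb
    have hmm' : midpoint ℝ (p a) (p b) + midpoint ℝ (p a) (p b) = p a + p b :=
      midpoint_add_self ℝ (p a) (p b)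
    have hkey := affineIndependent_iff.1 hp Finset.univ
      (fun s => w s + (if s = a then w b / 2 else 0) - (if s = b then w b / 2 else 0))
      (by simp [Finset.sum_add_distrib, Finset.sum_sub_distrib, hw0])
      (by
        simp only [sub_smul, add_smul, ite_smul, zero_smul, Finset.sum_add_distrib,
          Finset.sum_sub_distrib, Finset.sum_ite_eq', Finset.mem_univ, if_true]
        linear_combination (norm := module) hcomb - (w b / 2) • hmm')
    have hb0 : w b = 0 := by
      have h := hkey b (Finset.mem_univ b)
      simp [Ne.symm hab] at h
      linarith
    by_cases he1 : e = b
    · rw [he1]; exact hb0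
    by_cases he2 : e = a
    · have h := hkey a (Finset.mem_univ a)
      simp [hab] at h
      rw [he2]; linarith
    · have h := hkey e (Finset.mem_univ e)
      simpa [he1, he2] using h
  have hindA : AffineIndependent ℝ A := by
    rw [hAdef, hmdef]; exact hindep i j hij
  have hindB : AffineIndependent ℝ B := by
    have h := hindep j i (Ne.symm hij)
    rw [midpoint_comm] at h
    rw [hBdef, hmdef]; exact h
  -- the splitting of the hull
  have hmσ : m ∈ convexHull ℝ (Set.range p) :=
    (convex_convexHull ℝ _).segment_subset
      (subset_convexHull ℝ _ (Set.mem_range_self i)) (subset_convexHull ℝ _ (Set.mem_range_self j))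
      (midpoint_mem_segment (p i) (p j))
  have hsplit : convexHull ℝ (Set.range p)
      = convexHull ℝ (Set.range A) ∪ convexHull ℝ (Set.range B) := by
    apply subset_antisymm
    · intro x hx
      obtain ⟨t, ht0, ht1, htx⟩ := (mem_hull_iff' p x).1 hx
      by_cases hcs : t j ≤ t i
      · left
        rw [mem_hull_iff']
        refine ⟨fun k => t k + (if k = j then t j else 0) - (if k = i then t j else 0),
          fun k => ?_, ?_, ?_⟩
        · dsimp only
          by_cases h1 : k = j
          · rw [if_pos h1, if_neg (show ¬ k = i by rw [h1]; exact Ne.symm hij), sub_zero]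
            have h2 := ht0 k; have h3 := ht0 j; linarith
          · by_cases h2 : k = i
            · rw [if_neg h1, if_pos h2, add_zero, h2]
              linarith
            · rw [if_neg h1, if_neg h2, add_zero, sub_zero]
              exact ht0 k
        · simp [Finset.sum_add_distrib, Finset.sum_sub_distrib, ht1]
        · simp only [sub_smul, add_smul, ite_smul, zero_smul, Finset.sum_add_distrib,
            Finset.sum_sub_distrib, Finset.sum_ite_eq', Finset.mem_univ, if_true]
          rw [hAdef, sum_smul_update' t p j m, Function.update_self,
            Function.update_of_ne hij]
          linear_combination (norm := module) htx + t j • hmm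
      · right
        rw [mem_hull_iff']
        refine ⟨fun k => t k + (if k = i then t i else 0) - (if k = j then t i else 0),
          fun k => ?_, ?_, ?_⟩
        · dsimp only
          by_cases h1 : k = i
          · rw [if_pos h1, if_neg (show ¬ k = j by rw [h1]; exact hij), sub_zero]
            have h2 := ht0 k; have h3 := ht0 i; linarith
          · by_cases h2 : k = j
            · rw [if_neg h1, if_pos h2, add_zero, h2]
              linarith
            · rw [if_neg h1, if_neg h2, add_zero, sub_zero]
              exact ht0 k
        · simp [Finset.sum_add_distrib, Finset.sum_sub_distrib, ht1]
        · simp only [sub_smul, add_smul, ite_smul, zero_smul, Finset.sum_add_distrib,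
            Finset.sum_sub_distrib, Finset.sum_ite_eq', Finset.mem_univ, if_true]
          rw [hBdef, sum_smul_update' t p i m, Function.update_self,
            Function.update_of_ne (Ne.symm hij)]
          linear_combination (norm := module) htx + t i • hmm
    · apply Set.union_subset
      · apply convexHull_min ?_ (convex_convexHull ℝ _)
        rintro _ ⟨k, rfl⟩
        by_cases h1 : k = j
        · subst h1; rw [hAj]; exact hmσ
        · rw [hAdef, Function.update_of_ne h1]
          exact subset_convexHull ℝ _ (Set.mem_range_self k)
      · apply convexHull_min ?_ (convex_convexHull ℝ _)
        rintro _ ⟨k, rfl⟩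
        by_cases h1 : k = i
        · subst h1; rw [hBi]; exact hmσ
        · rw [hBdef, Function.update_of_ne h1]
          exact subset_convexHull ℝ _ (Set.mem_range_self k)
  -- the reflection swaps the two halves
  have himgAB : ⇑μ '' Set.range A = Set.range B := by
    have hcomp : ⇑μ ∘ A = B ∘ (Equiv.swap i j) := by
      funext k
      show μ (A k) = B (Equiv.swap i j k)
      by_cases h1 : k = i
      · rw [h1, Equiv.swap_apply_left, hAi, hBj, hmi]
      · by_cases h2 : k = j
        · rw [h2, Equiv.swap_apply_right, hAj, hBi]
          exact (EuclideanGeometry.reflection_eq_self_iff m).2 hmH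
        · rw [Equiv.swap_apply_of_ne_of_ne h1 h2, hAdef, hBdef,
            Function.update_of_ne h2, Function.update_of_ne h1]
          exact (EuclideanGeometry.reflection_eq_self_iff (p k)).2
            ((hfix k).2 (honec k h1 h2))
    calc ⇑μ '' Set.range A = Set.range (⇑μ ∘ A) := (Set.range_comp _ _).symm
      _ = Set.range (B ∘ (Equiv.swap i j)) := by rw [hcomp]
      _ = Set.range B := by rw [Set.range_comp, Equiv.range_eq_univ, Set.image_univ]
  have hhull : ⇑μ '' convexHull ℝ (Set.range A) = convexHull ℝ (Set.range B) := by
    have h := AffineMap.image_convexHull μ.toAffineEquiv.toAffineMap (Set.range A)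
    simp only [AffineEquiv.coe_toAffineMap, AffineIsometryEquiv.coe_toAffineEquiv] at h
    rw [h, himgAB]
  exact ⟨A, B, hindA, hindB, hsplit, hhull⟩
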